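/- For every n ≥ 2, the (n+1)-ary Boolean relation R = { (x₁,…,xₙ,c₀) ∈ Bool^{n+1} | ¬(x₁ ∧ ⋯ ∧ xₙ) ∧ (c₀ = 0) } is a weak base of the co-clone it generates (this co-clone is IS^n_{1} in Post's lattice): for every finite set Δ of Boolean relations with Pol(Δ) = Pol({R}) one has pPol(Δ) ⊆ pPol({R}). -/
import Mathlib


/-- A Boolean relation of arity `k`: a set of `k`-tuples over `Bool`. -/
abbrev BRel (k : ℕ) := Set (Fin k → Bool)

/-- A total `m`-ary Boolean operation `f` preserves a `k`-ary relation `R`. -/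
def Preserves {m k : ℕ} (f : (Fin m → Bool) → Bool) (R : BRel k) : Prop :=
  ∀ ts : Fin m → Fin k → Bool, (∀ j, ts j ∈ R) → (fun i => f (fun j => ts j i)) ∈ R

/-- A partial `m`-ary Boolean operation (modelled with `Option Bool`; `none` =
undefined) preserves a `k`-ary relation `R`. -/
def PPreserves {m k : ℕ} (f : (Fin m → Bool) → Option Bool) (R : BRel k) : Prop :=
  ∀ ts : Fin m → Fin k → Bool, (∀ j, ts j ∈ R) →
    ∀ u : Fin k → Bool, (∀ i, f (fun j => ts j i) = some (u i)) → u ∈ R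

/-- The set of all (finitary, total) polymorphisms of a set of relations. -/
def Pol (Γ : Set (Σ k, BRel k)) : Set (Σ m, (Fin m → Bool) → Bool) :=
  { f | ∀ R ∈ Γ, Preserves f.2 R.2 }

/-- The set of all partial polymorphisms of a set of relations. -/
def pPol (Γ : Set (Σ k, BRel k)) : Set (Σ m, (Fin m → Bool) → Option Bool) :=
  { f | ∀ R ∈ Γ, PPreserves f.2 R.2 }

/-- `R` is a weak base of the co-clone it generates: every finite `Δ` with the
same polymorphisms as `R` satisfies `pPol Δ ⊆ pPol {R}`. -/
def IsWeakBase {k : ℕ} (R : BRel k) : Prop :=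
  ∀ Δ : Set (Σ k, BRel k), Δ.Finite →
    Pol Δ = Pol {⟨k, R⟩} → pPol Δ ⊆ pPol {⟨k, R⟩}

namespace WB7

def emb {n : ℕ} (i : Fin n) : Fin (n + 1) := Fin.castLE (Nat.le_succ n) i

def Rel (n : ℕ) : BRel (n + 1) :=
  { t | ¬ (∀ i : Fin n, t (emb i) = true) ∧ t (Fin.last n) = false }

noncomputable def S (n : ℕ) : ℕ := Fintype.card (Fin (n + 1) → Bool)

noncomputable def enc (n : ℕ) : (Fin (n + 1) → Bool) ≃ Fin (S n) := Fintype.equivFin _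

open Classical in
noncomputable def fix (n : ℕ) (r : Fin (n + 1) → Bool) : Fin (n + 1) → Bool :=
  if r ∈ Rel n then r else fun _ => false

noncomputable def col (n : ℕ) (i : Fin (n + 1)) : Fin (S n) → Bool :=
  fun l => fix n ((enc n).symm l) i

open Classical in
noncomputable def rho (n : ℕ) (a : Fin (S n) → Bool) : Fin (n + 1) :=
  if h : ∃ i : Fin (n + 1), i ≠ Fin.last n ∧ col n i = a then h.choose else Fin.last n

noncomputable def hop (n : ℕ) (t : Fin (n + 1) → Bool) : (Fin (S n) → Bool) → Bool :=
  fun a => t (rho n a)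

lemma zero_mem (n : ℕ) (hn : 2 ≤ n) : (fun _ => false) ∈ Rel n := by
  constructor
  · intro h
    exact absurd (h ⟨0, by omega⟩) (by simp)
  · rfl

lemma fix_mem (n : ℕ) (hn : 2 ≤ n) (r : Fin (n+1) → Bool) : fix n r ∈ Rel n := by
  unfold fix
  split
  · assumption
  · exact zero_mem n hn

lemma fix_of_mem (n : ℕ) {r : Fin (n+1) → Bool} (h : r ∈ Rel n) : fix n r = r := by
  unfold fix; exact if_pos h

def w {n : ℕ} (i : Fin (n+1)) : Fin (n+1) → Bool := fun j => if j = i then true else false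

lemma w_mem (n : ℕ) (hn : 2 ≤ n) {i : Fin (n+1)} (hi : i ≠ Fin.last n) : w i ∈ Rel n := by
  constructor
  · intro h
    by_cases h0 : i.val = 0
    · have h1 := h ⟨1, by omega⟩
      have hne : emb (⟨1, by omega⟩ : Fin n) ≠ i := by
        intro he
        have : (1 : ℕ) = i.val := congrArg Fin.val he
        omega
      simp [w, hne] at h1
    · have h1 := h ⟨0, by omega⟩
      have hne : emb (⟨0, by omega⟩ : Fin n) ≠ i := by
        intro he
        have : (0 : ℕ) = i.val := congrArg Fin.val he
        omega
      simp [w, hne] at h1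
  · simp [w, (Ne.symm hi : Fin.last n ≠ i)]

lemma col_inj (n : ℕ) (hn : 2 ≤ n) {i j : Fin (n+1)} (hi : i ≠ Fin.last n)
    (h : col n i = col n j) : i = j := by
  have hl := congrFun h (enc n (w i))
  simp only [col, Equiv.symm_apply_apply] at hl
  rw [fix_of_mem n (w_mem n hn hi)] at hl
  simp only [w, if_pos rfl] at hl
  by_contra hne
  rw [if_neg (fun hji : j = i => hne hji.symm)] at hl
  simp at hl

lemma col_last (n : ℕ) (hn : 2 ≤ n) : col n (Fin.last n) = fun _ => false := by
  funext l
  exact (fix_mem n hn ((enc n).symm l)).2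

lemma rho_col (n : ℕ) (hn : 2 ≤ n) (i : Fin (n+1)) : rho n (col n i) = i := by
  unfold rho
  split
  · next h =>
    exact col_inj n hn h.choose_spec.1 h.choose_spec.2
  · next h =>
    by_contra hne
    exact h ⟨i, fun hl => hne (hl ▸ rfl), rfl⟩

lemma col_rho (n : ℕ) {a : Fin (S n) → Bool} (h : rho n a ≠ Fin.last n) :
    col n (rho n a) = a := by
  by_cases hex : ∃ i : Fin (n+1), i ≠ Fin.last n ∧ col n i = a
  · have : rho n a = hex.choose := by unfold rho; rw [dif_pos hex]
    rw [this]
    exact hex.choose_spec.2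
  · exact absurd (by unfold rho; rw [dif_neg hex]) h

lemma L1 (n : ℕ) (hn : 2 ≤ n) {t : Fin (n+1) → Bool} (ht : t ∈ Rel n) :
    Preserves (hop n t) (Rel n) := by
  intro ts hts
  obtain ⟨ht1, ht2⟩ := ht
  push_neg at ht1
  obtain ⟨k, htk⟩ := ht1
  replace htk : t (emb k) = false := by simpa using htk
  constructor
  · intro hall
    set a : Fin n → (Fin (S n) → Bool) := fun i => fun l => ts l (emb i) with ha
    have hne : ∀ i : Fin n, rho n (a i) ≠ Fin.last n ∧ rho n (a i) ≠ emb k := by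
      intro i
      have hi := hall i
      simp only [hop] at hi
      constructor
      · intro he; rw [he, ht2] at hi; exact Bool.false_ne_true hi
      · intro he; rw [he, htk] at hi; exact Bool.false_ne_true hi
    set rstar : Fin (n+1) → Bool :=
      fun j => if j = emb k ∨ j = Fin.last n then false else true with hrs
    have hrmem : rstar ∈ Rel n := by
      constructor
      · intro h
        have hk := h k
        simp only [hrs, if_pos (Or.inl rfl)] at hk
        exact Bool.false_ne_true hk
      · simp [hrs]
    have hcol : ∀ i : Fin n, ts (enc n rstar) (emb i) = rstar (rho n (a i)) := by
      intro i
      have h2 := congrFun (col_rho n (hne i).1) (enc n rstar)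
      simp only [col, Equiv.symm_apply_apply] at h2
      rw [fix_of_mem n hrmem] at h2
      exact h2.symm
    have hallt : ∀ i : Fin n, ts (enc n rstar) (emb i) = true := by
      intro i
      have hcond : ¬ (rho n (a i) = emb k ∨ rho n (a i) = Fin.last n) := by
        push_neg; exact ⟨(hne i).2, (hne i).1⟩
      rw [hcol i]
      simp only [hrs, if_neg hcond]
    exact (hts _).1 hallt
  · show hop n t (fun l => ts l (Fin.last n)) = false
    have hc : (fun l => ts l (Fin.last n)) = col n (Fin.last n) := by
      funext l
      rw [col_last n hn]
      exact (hts l).2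
    rw [hc, hop, rho_col n hn, ht2]

lemma L2 (n : ℕ) (hn : 2 ≤ n) {t : Fin (n+1) → Bool}
    (h : Preserves (hop n t) (Rel n)) : t ∈ Rel n := by
  have hm := h (fun l => fix n ((enc n).symm l)) (fun l => fix_mem n hn _)
  have heq : (fun i => hop n t (fun l => fix n ((enc n).symm l) i)) = t := by
    funext i
    show t (rho n (col n i)) = t i
    rw [rho_col n hn]
  rwa [heq] at hm

lemma key (n : ℕ) (hn : 2 ≤ n) : IsWeakBase (Rel n) := by
  intro Δ hfin hPol f hf R' hR'
  rw [Set.mem_singleton_iff] at hR'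
  subst hR'
  intro ts hts u hu
  have hA : ∀ j, (⟨S n, hop n (ts j)⟩ : Σ m, (Fin m → Bool) → Bool) ∈ Pol Δ := by
    intro j
    rw [hPol]
    intro R'' hR''
    rw [Set.mem_singleton_iff] at hR''
    subst hR''
    exact L1 n hn (hts j)
  have hB : (⟨S n, hop n u⟩ : Σ m, (Fin m → Bool) → Bool) ∈ Pol Δ := by
    intro R'' hR''
    intro qs hqs
    have hv : ∀ j, (fun i => ts j (rho n (fun l => qs l i))) ∈ R''.2 := by
      intro j
      exact hA j R'' hR'' qs hqs
    exact hf R'' hR'' _ hv (fun i => u (rho n (fun l => qs l i)))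
      (fun i => hu (rho n (fun l => qs l i)))
  rw [hPol] at hB
  exact L2 n hn (hB ⟨n+1, Rel n⟩ rfl)

end WB7

theorem stmt7 (n : ℕ) (hn : 2 ≤ n) :
    IsWeakBase { t : Fin (n + 1) → Bool |
      ¬ (∀ i : Fin n, t (Fin.castLE (by omega) i) = true) ∧
      t ⟨n, by omega⟩ = false } := by
  exact WB7.key n hn
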